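/- There exists a unique crossing radius r > 0 such that g(μ + r) = h(μ + r); moreover, g(x) > h(x) for all x with |x − μ| < r (the Gaussian has higher density than the t-distribution near the mean) and g(x) < h(x) for all x with |x − μ| > r (the Gaussian has lower density than the t-distribution in the tails). -/

import Mathlib

open Real

noncomputable section

/-- Density of the Gaussian distribution `N(μ, σ²)`. -/
def gaussDensity (μ σ : ℝ) (x : ℝ) : ℝ :=
  (Real.sqrt (2 * Real.pi * σ ^ 2))⁻¹ * Real.exp (-(x - μ) ^ 2 / (2 * σ ^ 2))

/-- Density of the Student t-distribution with `ρ` degrees of freedom,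
location `μ` and scale `s`. -/
def studentTDensity (μ ρ s : ℝ) (x : ℝ) : ℝ :=
  Real.Gamma ((ρ + 1) / 2) / (Real.Gamma (ρ / 2) * Real.sqrt (ρ * Real.pi) * s) *
    (1 + (x - μ) ^ 2 / (ρ * s ^ 2)) ^ (-(ρ + 1) / 2 : ℝ)

lemma gamma_add_half_le (a : ℝ) (ha : 0 < a) :
    Real.Gamma (a + 1/2) ≤ Real.Gamma a * Real.sqrt a := by
  have h1 : 0 < Real.Gamma a := Real.Gamma_pos_of_pos ha
  have h2 : 0 < Real.Gamma (a + 1) := Real.Gamma_pos_of_pos (by linarith)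
  have h3 : 0 < Real.Gamma (a + 1/2) := Real.Gamma_pos_of_pos (by linarith)
  have hconv := Real.convexOn_log_Gamma.2 (Set.mem_Ioi.mpr ha)
    (Set.mem_Ioi.mpr (show (0:ℝ) < a + 1 by linarith))
    (by norm_num : (0:ℝ) ≤ 1/2) (by norm_num : (0:ℝ) ≤ 1/2) (by norm_num)
  simp only [smul_eq_mul, Function.comp] at hconv
  have harg : (1/2 : ℝ) * a + (1/2 : ℝ) * (a + 1) = a + 1/2 := by ring
  rw [harg] at hconv
  have hsq : Real.Gamma (a + 1/2) ^ 2 ≤ Real.Gamma a * Real.Gamma (a + 1) := by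
    have e1 : Real.log (Real.Gamma (a + 1/2) ^ 2) = 2 * Real.log (Real.Gamma (a + 1/2)) := by
      rw [Real.log_pow]; push_cast; ring
    have e2 : Real.log (Real.Gamma a * Real.Gamma (a + 1)) =
        Real.log (Real.Gamma a) + Real.log (Real.Gamma (a + 1)) :=
      Real.log_mul h1.ne' h2.ne'
    have hlog2 : Real.log (Real.Gamma (a + 1/2) ^ 2) ≤
        Real.log (Real.Gamma a * Real.Gamma (a + 1)) := by rw [e1, e2]; linarith
    exact (Real.log_le_log_iff (by positivity) (by positivity)).mp hlog2
  rw [Real.Gamma_add_one ha.ne'] at hsq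
  have : Real.Gamma (a + 1/2) ≤ Real.sqrt (a * Real.Gamma a ^ 2) := by
    rw [Real.le_sqrt h3.le (by positivity)]
    nlinarith
  calc Real.Gamma (a + 1/2) ≤ Real.sqrt (a * Real.Gamma a ^ 2) := this
    _ = Real.Gamma a * Real.sqrt a := by
        rw [Real.sqrt_mul ha.le, Real.sqrt_sq h1.le]; ring

set_option maxHeartbeats 1000000 in
/-- There is a unique crossing radius `r > 0` with `g(μ+r) = h(μ+r)`; moreover the
Gaussian density exceeds the Student t density strictly inside radius `r` around the
mean and is strictly below it outside radius `r` (in the tails). Here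
`s = σ√(ρ/(ρ−2))` is the paper's scale choice. -/
theorem gauss_studentT_unique_crossing (μ σ ρ : ℝ) (hσ : 0 < σ) (hρ : 2 < ρ) :
    ∃ r : ℝ, 0 < r ∧
      gaussDensity μ σ (μ + r) = studentTDensity μ ρ (σ * Real.sqrt (ρ / (ρ - 2))) (μ + r) ∧
      (∀ r' : ℝ, 0 < r' →
        gaussDensity μ σ (μ + r') = studentTDensity μ ρ (σ * Real.sqrt (ρ / (ρ - 2))) (μ + r') →
        r' = r) ∧
      (∀ x : ℝ, |x - μ| < r →
        gaussDensity μ σ x > studentTDensity μ ρ (σ * Real.sqrt (ρ / (ρ - 2))) x) ∧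
      (∀ x : ℝ, |x - μ| > r →
        gaussDensity μ σ x < studentTDensity μ ρ (σ * Real.sqrt (ρ / (ρ - 2))) x) := by
  have hρ0 : (0:ℝ) < ρ := by linarith
  have hρ2 : (0:ℝ) < ρ - 2 := by linarith
  set s : ℝ := σ * Real.sqrt (ρ / (ρ - 2)) with hs_def
  have hratio1 : (1:ℝ) < ρ / (ρ - 2) := by
    rw [lt_div_iff₀ hρ2]; linarith
  have hs_gt : σ < s := by
    have : (1:ℝ) < Real.sqrt (ρ / (ρ - 2)) := by
      rw [show (1:ℝ) = Real.sqrt 1 by simp]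
      exact Real.sqrt_lt_sqrt (by norm_num) hratio1
    nlinarith
  have hs : 0 < s := lt_trans hσ hs_gt
  have hs2 : s ^ 2 = σ ^ 2 * ρ / (ρ - 2) := by
    rw [hs_def, mul_pow, Real.sq_sqrt (by positivity)]; ring
  set k : ℝ := ρ * s ^ 2 with hk_def
  have hk : 0 < k := by positivity
  have hkey : (ρ + 1) * σ ^ 2 < k := by
    rw [hk_def, hs2]
    rw [show ρ * (σ ^ 2 * ρ / (ρ - 2)) = σ ^ 2 * ρ ^ 2 / (ρ - 2) by ring,
      lt_div_iff₀ hρ2]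
    nlinarith
  set c₁ : ℝ := (Real.sqrt (2 * Real.pi * σ ^ 2))⁻¹ with hc1_def
  set c₂ : ℝ := Real.Gamma ((ρ + 1) / 2) / (Real.Gamma (ρ / 2) * Real.sqrt (ρ * Real.pi) * s)
    with hc2_def
  have hπ : 0 < Real.pi := Real.pi_pos
  have hc1 : 0 < c₁ := by positivity
  have hΓ1 : 0 < Real.Gamma ((ρ + 1) / 2) := Real.Gamma_pos_of_pos (by linarith)
  have hΓ2 : 0 < Real.Gamma (ρ / 2) := Real.Gamma_pos_of_pos (by linarith)
  have hc2 : 0 < c₂ := by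
    rw [hc2_def]; positivity
  -- c₂ < c₁
  have hc2lt : c₂ < c₁ := by
    have hgam : Real.Gamma ((ρ + 1) / 2) ≤ Real.Gamma (ρ / 2) * Real.sqrt (ρ / 2) := by
      have := gamma_add_half_le (ρ / 2) (by linarith)
      rwa [show ρ / 2 + 1/2 = (ρ + 1) / 2 by ring] at this
    set A : ℝ := Real.sqrt (ρ / 2) / (Real.sqrt (ρ * Real.pi) * s) with hA_def
    have hA : 0 < A := by positivity
    have h1 : c₂ ≤ A := by
      rw [hc2_def, hA_def]
      rw [div_le_div_iff₀ (by positivity) (by positivity)]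
      calc Real.Gamma ((ρ + 1) / 2) * (Real.sqrt (ρ * Real.pi) * s)
          ≤ Real.Gamma (ρ / 2) * Real.sqrt (ρ / 2) * (Real.sqrt (ρ * Real.pi) * s) := by
            apply mul_le_mul_of_nonneg_right hgam (by positivity)
        _ = Real.sqrt (ρ / 2) * (Real.Gamma (ρ / 2) * Real.sqrt (ρ * Real.pi) * s) := by ring
    have h2 : A < c₁ := by
      have hA2 : A ^ 2 = (2 * Real.pi * s ^ 2)⁻¹ := by
        rw [hA_def, div_pow, mul_pow, Real.sq_sqrt (by positivity),
          Real.sq_sqrt (by positivity)]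
        field_simp
      have hc12 : c₁ ^ 2 = (2 * Real.pi * σ ^ 2)⁻¹ := by
        rw [hc1_def, inv_pow, Real.sq_sqrt (by positivity)]
      have hlt : A ^ 2 < c₁ ^ 2 := by
        rw [hA2, hc12]
        apply inv_strictAnti₀ (by positivity)
        have : σ ^ 2 < s ^ 2 := by nlinarith
        nlinarith
      exact lt_of_pow_lt_pow_left₀ 2 hc1.le hlt
    linarith
  -- the log-difference function
  set φ : ℝ → ℝ := fun t =>
    Real.log c₁ - Real.log c₂ - t / (2 * σ ^ 2) + ((ρ + 1) / 2) * Real.log (1 + t / k)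
    with hφ_def
  have hφval : ∀ t : ℝ, φ t =
      Real.log c₁ - Real.log c₂ - t / (2 * σ ^ 2) + ((ρ + 1) / 2) * Real.log (1 + t / k) :=
    fun t => rfl
  have hφ0 : 0 < φ 0 := by
    have : φ 0 = Real.log c₁ - Real.log c₂ := by rw [hφval 0]; simp
    rw [this]
    have := Real.log_lt_log hc2 hc2lt
    linarith
  -- key: φ relates log of densities
  have hgpos : ∀ x : ℝ, 0 < gaussDensity μ σ x := by
    intro x; unfold gaussDensity; positivity
  have hhpos : ∀ x : ℝ, 0 < studentTDensity μ ρ s x := by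
    intro x; unfold studentTDensity
    apply mul_pos (by positivity)
    apply Real.rpow_pos_of_pos
    have : 0 ≤ (x - μ) ^ 2 / (ρ * s ^ 2) := by positivity
    linarith
  have hbase : ∀ x : ℝ, (0:ℝ) < 1 + (x - μ) ^ 2 / k := by
    intro x
    have : 0 ≤ (x - μ) ^ 2 / k := by positivity
    linarith
  have hlog_diff : ∀ x : ℝ,
      Real.log (gaussDensity μ σ x) - Real.log (studentTDensity μ ρ s x) = φ ((x - μ) ^ 2) := by
    intro x
    have e1 : Real.log (gaussDensity μ σ x) = Real.log c₁ + (-(x - μ) ^ 2 / (2 * σ ^ 2)) := by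
      unfold gaussDensity
      rw [Real.log_mul hc1.ne' (Real.exp_ne_zero _), Real.log_exp]
    have e2 : Real.log (studentTDensity μ ρ s x) =
        Real.log c₂ + (-(ρ + 1) / 2) * Real.log (1 + (x - μ) ^ 2 / k) := by
      unfold studentTDensity
      rw [Real.log_mul hc2.ne' (by
        apply ne_of_gt
        apply Real.rpow_pos_of_pos
        exact hbase x), Real.log_rpow (hbase x)]
    rw [e1, e2, hφ_def]
    ring
  -- comparison via φ
  have hcmp_lt : ∀ x : ℝ, 0 < φ ((x - μ) ^ 2) → studentTDensity μ ρ s x < gaussDensity μ σ x := by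
    intro x hx
    have := hlog_diff x
    have hlg : Real.log (studentTDensity μ ρ s x) < Real.log (gaussDensity μ σ x) := by linarith
    exact (Real.log_lt_log_iff (hhpos x) (hgpos x)).mp hlg
  have hcmp_gt : ∀ x : ℝ, φ ((x - μ) ^ 2) < 0 → gaussDensity μ σ x < studentTDensity μ ρ s x := by
    intro x hx
    have := hlog_diff x
    have hlg : Real.log (gaussDensity μ σ x) < Real.log (studentTDensity μ ρ s x) := by linarith
    exact (Real.log_lt_log_iff (hgpos x) (hhpos x)).mp hlg
  have hcmp_eq : ∀ x : ℝ, φ ((x - μ) ^ 2) = 0 → gaussDensity μ σ x = studentTDensity μ ρ s x := by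
    intro x hx
    have := hlog_diff x
    have hlg : Real.log (gaussDensity μ σ x) = Real.log (studentTDensity μ ρ s x) := by linarith
    calc gaussDensity μ σ x = Real.exp (Real.log (gaussDensity μ σ x)) :=
          (Real.exp_log (hgpos x)).symm
      _ = Real.exp (Real.log (studentTDensity μ ρ s x)) := by rw [hlg]
      _ = studentTDensity μ ρ s x := Real.exp_log (hhpos x)
  have hcmp_eq' : ∀ x : ℝ, gaussDensity μ σ x = studentTDensity μ ρ s x → φ ((x - μ) ^ 2) = 0 := by
    intro x hx
    have := hlog_diff x
    rw [hx] at this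
    linarith
  -- strict antitonicity of φ on [0, ∞)
  have hanti : StrictAntiOn φ (Set.Ici 0) := by
    intro t₁ ht₁ t₂ ht₂ hlt
    simp only [Set.mem_Ici] at ht₁ ht₂
    have hb1 : (0:ℝ) < 1 + t₁ / k := by
      have : 0 ≤ t₁ / k := by positivity
      linarith
    have hb2 : (0:ℝ) < 1 + t₂ / k := by
      have h0 : 0 ≤ t₂ / k := div_nonneg ht₂ hk.le
      linarith
    have hlogsub : Real.log (1 + t₂ / k) - Real.log (1 + t₁ / k) < (t₂ - t₁) / k := by
      rw [← Real.log_div hb2.ne' hb1.ne']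
      have hq : (1 + t₂ / k) / (1 + t₁ / k) ≠ 1 := by
        intro h
        rw [div_eq_one_iff_eq hb1.ne'] at h
        have h3 : t₂ / k = t₁ / k := by linarith
        have h4 := congrArg (· * k) h3
        simp only [div_mul_cancel₀ _ hk.ne'] at h4
        linarith
      have := Real.log_lt_sub_one_of_pos (by positivity) hq
      have heq : (1 + t₂ / k) / (1 + t₁ / k) - 1 = (t₂ - t₁) / (k + t₁) := by
        field_simp
        ring
      rw [heq] at this
      have hle : (t₂ - t₁) / (k + t₁) ≤ (t₂ - t₁) / k := by
        apply div_le_div_of_nonneg_left (by linarith) hk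
        linarith
      linarith
    have hρ1 : 0 < (ρ + 1) / 2 := by linarith
    rw [hφval t₂, hφval t₁]
    have h1 : ((ρ + 1) / 2) * (Real.log (1 + t₂ / k) - Real.log (1 + t₁ / k))
        < ((ρ + 1) / 2) * ((t₂ - t₁) / k) := by
      exact mul_lt_mul_of_pos_left hlogsub hρ1
    have h2 : ((ρ + 1) / 2) * ((t₂ - t₁) / k) < (t₂ - t₁) / (2 * σ ^ 2) := by
      rw [show (ρ + 1) / 2 * ((t₂ - t₁) / k) = ((ρ + 1) * (t₂ - t₁)) / (2 * k) by ring,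
        div_lt_div_iff₀ (by positivity) (by positivity)]
      nlinarith
    linarith [mul_sub ((ρ + 1) / 2) (Real.log (1 + t₂ / k)) (Real.log (1 + t₁ / k)),
      sub_div t₂ t₁ (2 * σ ^ 2)]
  -- upper bound used for IVT
  have hupper : ∀ t : ℝ, 0 ≤ t → φ t ≤ φ 0 - t * (1 / (2 * σ ^ 2) - (ρ + 1) / (2 * k)) := by
    intro t ht
    have hb : (0:ℝ) < 1 + t / k := by
      have : 0 ≤ t / k := by positivity
      linarith
    have hlog : Real.log (1 + t / k) ≤ t / k := by
      have := Real.log_le_sub_one_of_pos hb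
      linarith
    have hρ1 : 0 ≤ (ρ + 1) / 2 := by linarith
    have h1 : ((ρ + 1) / 2) * Real.log (1 + t / k) ≤ ((ρ + 1) / 2) * (t / k) :=
      mul_le_mul_of_nonneg_left hlog hρ1
    have hφ0eq : φ 0 = Real.log c₁ - Real.log c₂ := by rw [hφval 0]; simp
    rw [hφval t, hφ0eq]
    have e : ((ρ + 1) / 2) * (t / k) = t * ((ρ + 1) / (2 * k)) := by ring
    linarith [mul_sub t (1 / (2 * σ ^ 2)) ((ρ + 1) / (2 * k)),
      mul_one_div t (2 * σ ^ 2)]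
  set ε : ℝ := 1 / (2 * σ ^ 2) - (ρ + 1) / (2 * k) with hε_def
  have hε : 0 < ε := by
    rw [hε_def, sub_pos, div_lt_div_iff₀ (by positivity) (by positivity)]
    nlinarith
  set T : ℝ := (φ 0 + 1) / ε with hT_def
  have hT0 : 0 < T := by positivity
  have hφT : φ T < 0 := by
    have h := hupper T hT0.le
    have hTe : T * ε = φ 0 + 1 := by
      rw [hT_def]; exact div_mul_cancel₀ _ hε.ne'
    linarith
  -- continuity of φ
  have hφcont : ContinuousOn φ (Set.Icc 0 T) := by
    have : φ = fun t => Real.log c₁ - Real.log c₂ - t / (2 * σ ^ 2) +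
        ((ρ + 1) / 2) * Real.log (1 + t / k) := rfl
    rw [this]
    apply ContinuousOn.add
    · apply ContinuousOn.sub continuousOn_const
      exact (continuousOn_id.div continuousOn_const (by intro x _; positivity))
    · apply ContinuousOn.mul continuousOn_const
      apply ContinuousOn.log
      · exact continuousOn_const.add (continuousOn_id.div continuousOn_const
          (by intro x _; positivity))
      · intro t ht
        have h0 : 0 ≤ t := ht.1
        have : 0 ≤ t / k := by positivity
        positivity
  -- IVT
  have hmem : (0:ℝ) ∈ Set.Icc (φ T) (φ 0) := ⟨hφT.le, hφ0.le⟩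
  obtain ⟨t₀, ht₀mem, ht₀⟩ := intermediate_value_Icc' hT0.le hφcont hmem
  have ht₀pos : 0 < t₀ := by
    rcases lt_or_eq_of_le ht₀mem.1 with h | h
    · exact h
    · exfalso; rw [← h] at ht₀; rw [ht₀] at hφ0; exact lt_irrefl 0 hφ0
  refine ⟨Real.sqrt t₀, Real.sqrt_pos.mpr ht₀pos, ?_, ?_, ?_, ?_⟩
  · -- crossing
    apply hcmp_eq
    rw [show μ + Real.sqrt t₀ - μ = Real.sqrt t₀ by ring, Real.sq_sqrt ht₀pos.le]
    exact ht₀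
  · -- uniqueness
    intro r' hr' heq
    have h0 : φ ((μ + r' - μ) ^ 2) = 0 := hcmp_eq' _ heq
    rw [show μ + r' - μ = r' by ring] at h0
    have hinj : r' ^ 2 = t₀ := hanti.injOn
      (Set.mem_Ici.mpr (by positivity)) (Set.mem_Ici.mpr ht₀pos.le)
      (by rw [h0, ht₀])
    rw [← hinj, Real.sqrt_sq hr'.le]
  · -- inside
    intro x hx
    apply hcmp_lt
    have h1 : (x - μ) ^ 2 < t₀ := by
      have := sq_lt_sq' (by linarith [abs_nonneg (x - μ), neg_abs_le (x - μ)] : -Real.sqrt t₀ < x - μ)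
        (lt_of_le_of_lt (le_abs_self _) hx)
      calc (x - μ) ^ 2 < Real.sqrt t₀ ^ 2 := this
        _ = t₀ := Real.sq_sqrt ht₀pos.le
    have := hanti (Set.mem_Ici.mpr (by positivity : (0:ℝ) ≤ (x - μ) ^ 2))
      (Set.mem_Ici.mpr ht₀pos.le) h1
    rw [ht₀] at this
    linarith
  · -- outside
    intro x hx
    apply hcmp_gt
    have h1 : t₀ < (x - μ) ^ 2 := by
      have h2 : Real.sqrt t₀ ^ 2 < (x - μ) ^ 2 := by
        have h3 : Real.sqrt t₀ < |x - μ| := hx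
        calc Real.sqrt t₀ ^ 2 < |x - μ| ^ 2 := by
              apply pow_lt_pow_left₀ h3 (Real.sqrt_nonneg _)
              norm_num
          _ = (x - μ) ^ 2 := sq_abs _
      rwa [Real.sq_sqrt ht₀pos.le] at h2
    have := hanti (Set.mem_Ici.mpr ht₀pos.le)
      (Set.mem_Ici.mpr (by positivity : (0:ℝ) ≤ (x - μ) ^ 2)) h1
    rw [ht₀] at this
    linarith
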